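/- For m ≥ 4, every binary 2-covering array of size m and maximal degree n = binom(m−1, ⌊m/2⌋−1) is equivalent to the standard maximal binary 2-covering array of size m; in particular, any two such maximal binary 2-covering arrays are equivalent. -/

import Mathlib

/-- An `m × n` matrix over `B_q = {0,…,q-1}` is a `t`-covering array if for any `t`
distinct column indices and any `q`-ary vector of length `t`, some row realizes it. -/
def IsCoveringArray (m n q t : ℕ) (C : Fin m → Fin n → Fin q) : Prop :=
  ∀ cols : Fin t → Fin n, Function.Injective cols →
    ∀ v : Fin t → Fin q, ∃ r : Fin m, ∀ j : Fin t, C r (cols j) = v j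

/-- `CAN t n q` : the minimal size `m` for which a `CA(m; t, n, q)` exists. -/
noncomputable def CAN (t n q : ℕ) : ℕ :=
  sInf { m | ∃ C : Fin m → Fin n → Fin q, IsCoveringArray m n q t C }

/-- The weight of the `i`-th column: the number of nonzero entries. -/
def colWt {m n q : ℕ} (C : Fin m → Fin n → Fin q) (i : Fin n) : ℕ :=
  (Finset.univ.filter fun r : Fin m => (C r i : ℕ) ≠ 0).card

/-- The support of the `i`-th column: the set of coordinates where it is nonzero. -/
def colSupp {m n q : ℕ} (C : Fin m → Fin n → Fin q) (i : Fin n) : Finset (Fin m) :=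
  Finset.univ.filter fun r : Fin m => (C r i : ℕ) ≠ 0

/-- The Hamming distance between the `i`-th and `j`-th columns. -/
def colDist {m n q : ℕ} (C : Fin m → Fin n → Fin q) (i j : Fin n) : ℕ :=
  (Finset.univ.filter fun r : Fin m => C r i ≠ C r j).card

/-- Two arrays are equivalent if one is obtained from the other by a row permutation,
a column permutation, and value permutations applied columnwise. -/
def CAEquiv {m n q : ℕ} (C C' : Fin m → Fin n → Fin q) : Prop :=
  ∃ (σ : Equiv.Perm (Fin m)) (τ : Equiv.Perm (Fin n)) (f : Fin n → Equiv.Perm (Fin q)),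
    ∀ r i, C' r i = f i (C (σ r) (τ i))

/-- The standard maximal binary 2-covering array of size `m` : an
`m × (m-1).choose (m/2 - 1)` binary matrix whose first row is all ones and whose columns,
restricted to the remaining `m - 1` rows, are exactly (i.e. are pairwise distinct) the binary
vectors of length `m-1` with `m/2 - 1` ones. -/
def IsStandardMaxArray (m : ℕ) (S : Fin m → Fin ((m-1).choose (m/2 - 1)) → Fin 2) : Prop :=
  (∀ (r : Fin m) (i), (r : ℕ) = 0 → S r i = 1) ∧
  (Function.Injective fun i => fun r => S r i) ∧
  (∀ i, (Finset.univ.filter fun r : Fin m => (r : ℕ) ≠ 0 ∧ S r i = 1).card = m/2 - 1)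

attribute [-instance] instDecidableEqFin
set_option linter.unusedSectionVars false
set_option linter.unusedVariables false

open Finset
open Finset.Colex
open scoped FinsetFamily

namespace CAWork



/-- choose is (non-strictly) monotone up to the middle -/
lemma choose_le_step {n k : ℕ} (h : 2 * (k + 1) ≤ n + 1) :
    n.choose k ≤ n.choose (k + 1) := by
  have h1 := Nat.choose_succ_right_eq n k
  have hk : k + 1 ≤ n - k := by omega
  have := Nat.mul_le_mul_left (n.choose k) hk
  nlinarith [Nat.choose_pos (show k ≤ n by omega)]

lemma choose_lt_step {n k : ℕ} (h : 2 * (k + 1) ≤ n) :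
    n.choose k < n.choose (k + 1) := by
  have h1 := Nat.choose_succ_right_eq n k
  have hk : k + 2 ≤ n - k := by omega
  have hpos : 0 < n.choose k := Nat.choose_pos (by omega)
  nlinarith

lemma choose_mono_below {n a b : ℕ} (hab : a ≤ b) (hb : 2 * b ≤ n + 1) :
    n.choose a ≤ n.choose b := by
  induction b with
  | zero => interval_cases a; exact le_rfl
  | succ c ih =>
    rcases Nat.eq_or_lt_of_le hab with rfl | hlt
    · exact le_rfl
    · exact le_trans (ih (by omega) (by omega)) (choose_le_step (by omega))

lemma choose_strict_below {n a b : ℕ} (hab : a < b) (hb : 2 * b ≤ n) :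
    n.choose a < n.choose b := by
  obtain ⟨c, rfl⟩ : ∃ c, b = c + 1 := ⟨b - 1, by omega⟩
  exact lt_of_le_of_lt (choose_mono_below (by omega) (by omega)) (choose_lt_step (by omega))

variable {α : Type*} [DecidableEq α]

/-- In a ground set of size `2t-1`, shadows of `t`-families don't shrink. -/
lemma dc_card_le {V : Finset α} {t : ℕ} (ht : 1 ≤ t) (hV : #V = 2 * t - 1)
    {K : Finset (Finset α)} (hK : K ⊆ Finset.powersetCard t V) :
    #K ≤ #(∂ K) := by
  classical
  have hsized : ∀ A ∈ K, #A = t := fun A hA => (Finset.mem_powersetCard.1 (hK hA)).2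
  have hsub : ∀ A ∈ K, A ⊆ V := fun A hA => (Finset.mem_powersetCard.1 (hK hA)).1
  have hshadow_sized : ∀ D ∈ ∂ K, #D = t - 1 := fun D hD =>
    (Set.Sized.shadow (fun A hA => hsized A hA)) hD
  -- double counting
  have key : ∑ A ∈ K, #(Finset.bipartiteAbove (fun A D => D ⊆ A) (∂ K) A)
      = ∑ D ∈ ∂ K, #(Finset.bipartiteBelow (fun A D => D ⊆ A) K D) :=
    Finset.sum_card_bipartiteAbove_eq_sum_card_bipartiteBelow _
  have hup : ∀ A ∈ K, #(Finset.bipartiteAbove (fun A D => D ⊆ A) (∂ K) A) = t := by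
    intro A hA
    have : Finset.bipartiteAbove (fun A D => D ⊆ A) (∂ K) A = Finset.powersetCard (t-1) A := by
      ext D
      simp only [Finset.bipartiteAbove, Finset.mem_filter, Finset.mem_powersetCard]
      constructor
      · rintro ⟨hD, hDA⟩; exact ⟨hDA, hshadow_sized D hD⟩
      · rintro ⟨hDA, hDcard⟩
        refine ⟨?_, hDA⟩
        have hss : D ⊂ A := Finset.ssubset_iff_subset_ne.2 ⟨hDA, by
          intro h; rw [h] at hDcard; have := hsized A hA; omega⟩
        obtain ⟨a, haA, haD⟩ := Finset.exists_of_ssubset hss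
        have hin : insert a D ⊆ A := Finset.insert_subset haA hDA
        have hcard : #(insert a D) = t := by
          rw [Finset.card_insert_of_notMem haD]; omega
        have : insert a D = A := Finset.eq_of_subset_of_card_le hin (by
          rw [hcard, hsized A hA])
        rw [Finset.mem_shadow_iff_insert_mem]
        exact ⟨a, haD, by rw [this]; exact hA⟩
    rw [this, Finset.card_powersetCard, hsized A hA]
    rw [Nat.choose_symm (by omega), Nat.choose_one_right]
  have hdown : ∀ D ∈ ∂ K, #(Finset.bipartiteBelow (fun A D => D ⊆ A) K D) ≤ t := by
    intro D hD
    have hDV : D ⊆ V := by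
      rw [Finset.mem_shadow_iff_insert_mem] at hD
      obtain ⟨a, haD, hins⟩ := hD
      exact (Finset.subset_insert a D).trans (hsub _ hins)
    have himg : Finset.bipartiteBelow (fun A D => D ⊆ A) K D
        ⊆ (V \ D).image (fun a => insert a D) := by
      intro A hA
      rw [Finset.mem_bipartiteBelow] at hA
      obtain ⟨hAK, hDA⟩ := hA
      have hss : D ⊂ A := Finset.ssubset_iff_subset_ne.2 ⟨hDA, by
        intro h
        have h1 := hsized A hAK
        have h2 := hshadow_sized D hD
        rw [h] at h2; omega⟩
      obtain ⟨a, haA, haD⟩ := Finset.exists_of_ssubset hss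
      have : insert a D = A := Finset.eq_of_subset_of_card_le
        (Finset.insert_subset haA hDA)
        (by rw [Finset.card_insert_of_notMem haD, hsized A hAK]
            have := hshadow_sized D hD; omega)
      rw [Finset.mem_image]
      exact ⟨a, Finset.mem_sdiff.2 ⟨hsub A hAK haA, haD⟩, this⟩
    calc #(Finset.bipartiteBelow (fun A D => D ⊆ A) K D) ≤ #((V \ D).image (fun a => insert a D)) :=
          Finset.card_le_card himg
      _ ≤ #(V \ D) := Finset.card_image_le
      _ = t := by rw [Finset.card_sdiff_of_subset hDV, hV, hshadow_sized D hD]; omega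
  have h1 : #K * t = ∑ A ∈ K, #(Finset.bipartiteAbove (fun A D => D ⊆ A) (∂ K) A) := by
    rw [Finset.sum_congr rfl hup, Finset.sum_const, smul_eq_mul]
  have h2 : ∑ D ∈ ∂ K, #(Finset.bipartiteBelow (fun A D => D ⊆ A) K D) ≤ #(∂ K) * t := by
    calc ∑ D ∈ ∂ K, #(Finset.bipartiteBelow (fun A D => D ⊆ A) K D) ≤ ∑ D ∈ ∂ K, t :=
          Finset.sum_le_sum hdown
      _ = #(∂ K) * t := by rw [Finset.sum_const, smul_eq_mul]
  have : #K * t ≤ #(∂ K) * t := by rw [h1, key]; exact h2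
  exact Nat.le_of_mul_le_mul_right this (by omega)

variable {α : Type*} [DecidableEq α]

lemma dc_eq {V : Finset α} {t : ℕ} (ht : 1 ≤ t) (hV : #V = 2 * t - 1)
    {K : Finset (Finset α)} (hK : K ⊆ Finset.powersetCard t V)
    (hle : #(∂ K) ≤ #K) (hne : K.Nonempty) :
    K = Finset.powersetCard t V := by
  classical
  have hsized : ∀ A ∈ K, #A = t := fun A hA => (Finset.mem_powersetCard.1 (hK hA)).2
  have hsub : ∀ A ∈ K, A ⊆ V := fun A hA => (Finset.mem_powersetCard.1 (hK hA)).1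
  have hshadow_sized : ∀ D ∈ ∂ K, #D = t - 1 := fun D hD =>
    (Set.Sized.shadow (fun A hA => hsized A hA)) hD
  have key : ∑ A ∈ K, #(Finset.bipartiteAbove (fun A D => D ⊆ A) (∂ K) A)
      = ∑ D ∈ ∂ K, #(Finset.bipartiteBelow (fun A D => D ⊆ A) K D) :=
    Finset.sum_card_bipartiteAbove_eq_sum_card_bipartiteBelow _
  -- as in dc_card_le
  have hup : ∀ A ∈ K, #(Finset.bipartiteAbove (fun A D => D ⊆ A) (∂ K) A) = t := by
    intro A hA
    have heq : Finset.bipartiteAbove (fun A D => D ⊆ A) (∂ K) A = Finset.powersetCard (t-1) A := by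
      ext D
      simp only [Finset.bipartiteAbove, Finset.mem_filter, Finset.mem_powersetCard]
      constructor
      · rintro ⟨hD, hDA⟩; exact ⟨hDA, hshadow_sized D hD⟩
      · rintro ⟨hDA, hDcard⟩
        refine ⟨?_, hDA⟩
        have hss : D ⊂ A := Finset.ssubset_iff_subset_ne.2 ⟨hDA, by
          intro h; rw [h] at hDcard; have := hsized A hA; omega⟩
        obtain ⟨a, haA, haD⟩ := Finset.exists_of_ssubset hss
        have hin : insert a D ⊆ A := Finset.insert_subset haA hDA
        have hcard : #(insert a D) = t := by
          rw [Finset.card_insert_of_notMem haD]; omega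
        have : insert a D = A := Finset.eq_of_subset_of_card_le hin (by
          rw [hcard, hsized A hA])
        rw [Finset.mem_shadow_iff_insert_mem]
        exact ⟨a, haD, by rw [this]; exact hA⟩
    rw [heq, Finset.card_powersetCard, hsized A hA]
    rw [Nat.choose_symm (by omega), Nat.choose_one_right]
  have hDV : ∀ D ∈ ∂ K, D ⊆ V := by
    intro D hD
    rw [Finset.mem_shadow_iff_insert_mem] at hD
    obtain ⟨a, haD, hins⟩ := hD
    exact (Finset.subset_insert a D).trans (hsub _ hins)
  have himg : ∀ D ∈ ∂ K, Finset.bipartiteBelow (fun A D => D ⊆ A) K D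
      ⊆ (V \ D).image (fun a => insert a D) := by
    intro D hD A hA
    rw [Finset.mem_bipartiteBelow] at hA
    obtain ⟨hAK, hDA⟩ := hA
    have hss : D ⊂ A := Finset.ssubset_iff_subset_ne.2 ⟨hDA, by
      intro h
      have h1 := hsized A hAK
      have h2 := hshadow_sized D hD
      rw [h] at h2; omega⟩
    obtain ⟨a, haA, haD⟩ := Finset.exists_of_ssubset hss
    have : insert a D = A := Finset.eq_of_subset_of_card_le
      (Finset.insert_subset haA hDA)
      (by rw [Finset.card_insert_of_notMem haD, hsized A hAK]
          have := hshadow_sized D hD; omega)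
    rw [Finset.mem_image]
    exact ⟨a, Finset.mem_sdiff.2 ⟨hsub A hAK haA, haD⟩, this⟩
  have hcardVD : ∀ D ∈ ∂ K, #(V \ D) = t := by
    intro D hD
    rw [Finset.card_sdiff_of_subset (hDV D hD), hV, hshadow_sized D hD]; omega
  have hdown : ∀ D ∈ ∂ K, #(Finset.bipartiteBelow (fun A D => D ⊆ A) K D) ≤ t := by
    intro D hD
    calc #(Finset.bipartiteBelow (fun A D => D ⊆ A) K D)
        ≤ #((V \ D).image (fun a => insert a D)) := Finset.card_le_card (himg D hD)
      _ ≤ #(V \ D) := Finset.card_image_le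
      _ = t := hcardVD D hD
  -- equality forcing
  have hsum1 : ∑ A ∈ K, #(Finset.bipartiteAbove (fun A D => D ⊆ A) (∂ K) A) = #K * t := by
    rw [Finset.sum_congr rfl hup, Finset.sum_const, smul_eq_mul]
  have hforce : ∀ D ∈ ∂ K, #(Finset.bipartiteBelow (fun A D => D ⊆ A) K D) = t := by
    by_contra hcon
    push_neg at hcon
    obtain ⟨D0, hD0, hD0ne⟩ := hcon
    have hD0lt : #(Finset.bipartiteBelow (fun A D => D ⊆ A) K D0) < t :=
      lt_of_le_of_ne (hdown D0 hD0) hD0ne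
    have : ∑ D ∈ ∂ K, #(Finset.bipartiteBelow (fun A D => D ⊆ A) K D) < #(∂ K) * t := by
      calc ∑ D ∈ ∂ K, #(Finset.bipartiteBelow (fun A D => D ⊆ A) K D)
          < ∑ D ∈ ∂ K, t := Finset.sum_lt_sum (fun D hD => hdown D hD) ⟨D0, hD0, hD0lt⟩
        _ = #(∂ K) * t := by rw [Finset.sum_const, smul_eq_mul]
    rw [← key, hsum1] at this
    have : #K < #(∂ K) := by
      by_contra h
      push_neg at h
      exact absurd (Nat.mul_le_mul_right t h) (by omega)
    omega
  -- every extension of a shadow element is in K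
  have hext : ∀ D ∈ ∂ K, ∀ a ∈ V \ D, insert a D ∈ K := by
    intro D hD a ha
    have h1 : Finset.bipartiteBelow (fun A D => D ⊆ A) K D
        = (V \ D).image (fun a => insert a D) := by
      apply Finset.eq_of_subset_of_card_le (himg D hD)
      calc #((V \ D).image (fun a => insert a D)) ≤ #(V \ D) := Finset.card_image_le
        _ = t := hcardVD D hD
        _ = #(Finset.bipartiteBelow (fun A D => D ⊆ A) K D) := (hforce D hD).symm
    have : insert a D ∈ Finset.bipartiteBelow (fun A D => D ⊆ A) K D := by
      rw [h1, Finset.mem_image]; exact ⟨a, ha, rfl⟩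
    rw [Finset.mem_bipartiteBelow] at this
    exact this.1
  -- swap property
  have hswap : ∀ A ∈ K, ∀ x ∈ A, ∀ y ∈ V, y ∉ A → insert y (A.erase x) ∈ K := by
    intro A hA x hx y hyV hyA
    have hD : A.erase x ∈ ∂ K := Finset.erase_mem_shadow hA hx
    exact hext _ hD y (Finset.mem_sdiff.2 ⟨hyV, fun h => hyA (Finset.mem_of_mem_erase h)⟩)
  -- connectivity
  have hconn : ∀ (k : ℕ) (A B : Finset α), A ∈ K → B ⊆ V → #B = t → #(B \ A) = k → B ∈ K := by
    intro k
    induction k with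
    | zero =>
      intro A B hA hBV hBt hBA
      have : B ⊆ A := by
        intro b hb
        by_contra hbA
        have : b ∈ B \ A := Finset.mem_sdiff.2 ⟨hb, hbA⟩
        rw [Finset.card_eq_zero.1 hBA] at this
        exact absurd this (Finset.notMem_empty b)
      have : B = A := Finset.eq_of_subset_of_card_le this (by rw [hBt, hsized A hA])
      rwa [this]
    | succ k ih =>
      intro A B hA hBV hBt hBA
      have hBAne : (B \ A).Nonempty := Finset.card_pos.1 (by omega)
      obtain ⟨y, hy⟩ := hBAne
      have hycard : #(A \ B) = k + 1 := by
        rw [Finset.card_sdiff_comm (by rw [hBt, hsized A hA])] at hBA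
        omega
      have hABne : (A \ B).Nonempty := Finset.card_pos.1 (by omega)
      obtain ⟨x, hx⟩ := hABne
      obtain ⟨hyB, hyA⟩ := Finset.mem_sdiff.1 hy
      obtain ⟨hxA, hxB⟩ := Finset.mem_sdiff.1 hx
      have hA' : insert y (A.erase x) ∈ K := hswap A hA x hxA y (hBV hyB) hyA
      apply ih _ B hA' hBV hBt
      have hset : B \ (insert y (A.erase x)) = (B \ A).erase y := by
        ext b
        simp only [Finset.mem_sdiff, Finset.mem_insert, Finset.mem_erase]
        constructor
        · rintro ⟨hbB, hbn⟩
          exact ⟨fun h => hbn (Or.inl h), hbB,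
            fun hbA => hbn (Or.inr ⟨fun h => hxB (h ▸ hbB), hbA⟩)⟩
        · rintro ⟨hby, hbB, hbA⟩
          exact ⟨hbB, fun h => h.elim (fun h => hby h) (fun h => hbA h.2)⟩
      rw [hset, Finset.card_erase_of_mem hy, hBA]
      omega
  apply Finset.Subset.antisymm hK
  intro B hB
  obtain ⟨A0, hA0⟩ := hne
  rw [Finset.mem_powersetCard] at hB
  exact hconn _ A0 B hA0 hB.1 hB.2 rfl
variable {α : Type*} [DecidableEq α] [Fintype α]

lemma Iic_eq_range_succ (n : ℕ) : Finset.Iic n = Finset.range (n+1) := by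
  ext x; simp [Nat.lt_succ_iff]

lemma slice_sum_eq (F : Finset (Finset α)) :
    ∑ r ∈ Finset.range (Fintype.card α + 1), #(F # r) = #F := by
  rw [← Iic_eq_range_succ, Finset.sum_card_slice]

lemma lym_term_le {F : Finset (Finset α)} {b : ℕ}
    (hall : ∀ A ∈ F, (Fintype.card α).choose #A ≤ (Fintype.card α).choose b)
    {r : ℕ} (hr : r ∈ Finset.range (Fintype.card α + 1)) :
    (#(F # r) : ℚ) ≤ ((Fintype.card α).choose b : ℚ) *
      ((#(F # r) : ℚ) / ((Fintype.card α).choose r : ℚ)) := by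
  rcases (F # r).eq_empty_or_nonempty with h | h
  · simp [h]
  · obtain ⟨A, hA⟩ := h
    rw [Finset.mem_slice] at hA
    have hrn : r ≤ Fintype.card α := by
      rw [Finset.mem_range] at hr; omega
    have hcpos : (0:ℚ) < ((Fintype.card α).choose r : ℚ) := by
      exact_mod_cast Nat.choose_pos hrn
    have hch : ((Fintype.card α).choose r : ℚ) ≤ ((Fintype.card α).choose b : ℚ) := by
      have := hall A hA.1
      rw [hA.2] at this
      exact_mod_cast this
    rw [mul_div_assoc']
    rw [le_div_iff₀ hcpos]
    have h0 : (0:ℚ) ≤ (#(F # r) : ℚ) := by positivity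
    calc (#(F # r) : ℚ) * ((Fintype.card α).choose r : ℚ)
        ≤ (#(F # r) : ℚ) * ((Fintype.card α).choose b : ℚ) := by
          exact mul_le_mul_of_nonneg_left hch h0
      _ = ((Fintype.card α).choose b : ℚ) * (#(F # r) : ℚ) := mul_comm _ _

lemma lym_bound {F : Finset (Finset α)}
    (hanti : IsAntichain (· ⊆ ·) (F : Set (Finset α))) {b : ℕ}
    (hall : ∀ A ∈ F, (Fintype.card α).choose #A ≤ (Fintype.card α).choose b) :
    #F ≤ (Fintype.card α).choose b := by
  have hsum : ∑ r ∈ Finset.range (Fintype.card α + 1),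
      (#(F # r) : ℚ) / ((Fintype.card α).choose r : ℚ) ≤ 1 :=
    Finset.sum_card_slice_div_choose_le_one hanti
  have h1 : (#F : ℚ) ≤ ((Fintype.card α).choose b : ℚ) := by
    calc (#F : ℚ) = ∑ r ∈ Finset.range (Fintype.card α + 1), (#(F # r) : ℚ) := by
          rw [← Nat.cast_sum]
          rw [slice_sum_eq]
      _ ≤ ∑ r ∈ Finset.range (Fintype.card α + 1), ((Fintype.card α).choose b : ℚ) *
            ((#(F # r) : ℚ) / ((Fintype.card α).choose r : ℚ)) :=
          Finset.sum_le_sum (fun r hr => lym_term_le hall hr)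
      _ = ((Fintype.card α).choose b : ℚ) * ∑ r ∈ Finset.range (Fintype.card α + 1),
            ((#(F # r) : ℚ) / ((Fintype.card α).choose r : ℚ)) := by rw [Finset.mul_sum]
      _ ≤ ((Fintype.card α).choose b : ℚ) * 1 := by
          apply mul_le_mul_of_nonneg_left hsum (by positivity)
      _ = _ := mul_one _
  exact_mod_cast h1

lemma lym_bound_strict {F : Finset (Finset α)}
    (hanti : IsAntichain (· ⊆ ·) (F : Set (Finset α))) {b : ℕ}
    (hall : ∀ A ∈ F, (Fintype.card α).choose #A ≤ (Fintype.card α).choose b)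
    {A0 : Finset α} (hA0 : A0 ∈ F)
    (hstrict : (Fintype.card α).choose #A0 < (Fintype.card α).choose b) :
    #F < (Fintype.card α).choose b := by
  have hsum : ∑ r ∈ Finset.range (Fintype.card α + 1),
      (#(F # r) : ℚ) / ((Fintype.card α).choose r : ℚ) ≤ 1 :=
    Finset.sum_card_slice_div_choose_le_one hanti
  set n := Fintype.card α with hn
  have hr0 : #A0 ≤ n := by rw [hn]; exact Finset.card_le_univ A0
  have hr0mem : #A0 ∈ Finset.range (n + 1) := Finset.mem_range.2 (by omega)
  have hslice0 : A0 ∈ F # #A0 := Finset.mem_slice.2 ⟨hA0, rfl⟩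
  have hslicene : 0 < #(F # #A0) := Finset.card_pos.2 ⟨A0, hslice0⟩
  have hstrictterm : (#(F # #A0) : ℚ) < ((n).choose b : ℚ) *
      ((#(F # #A0) : ℚ) / ((n).choose #A0 : ℚ)) := by
    have hcpos : (0:ℚ) < ((n).choose #A0 : ℚ) := by
      exact_mod_cast Nat.choose_pos hr0
    rw [mul_div_assoc', lt_div_iff₀ hcpos]
    have hx : (1:ℚ) ≤ (#(F # #A0) : ℚ) := by exact_mod_cast hslicene
    have hch : ((n).choose #A0 : ℚ) < ((n).choose b : ℚ) := by exact_mod_cast hstrict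
    nlinarith
  have h1 : (#F : ℚ) < ((n).choose b : ℚ) := by
    calc (#F : ℚ) = ∑ r ∈ Finset.range (n + 1), (#(F # r) : ℚ) := by
          rw [← Nat.cast_sum]
          rw [slice_sum_eq]
      _ < ∑ r ∈ Finset.range (n + 1), ((n).choose b : ℚ) *
            ((#(F # r) : ℚ) / ((n).choose r : ℚ)) := by
          apply Finset.sum_lt_sum (fun r hr => lym_term_le hall hr)
          exact ⟨#A0, hr0mem, hstrictterm⟩
      _ = ((n).choose b : ℚ) * ∑ r ∈ Finset.range (n + 1),
            ((#(F # r) : ℚ) / ((n).choose r : ℚ)) := by rw [Finset.mul_sum]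
      _ ≤ ((n).choose b : ℚ) * 1 := by
          apply mul_le_mul_of_nonneg_left hsum (by positivity)
      _ = _ := mul_one _
  exact_mod_cast h1

lemma exists_initSeg (n0 r : ℕ) :
    ∀ s : ℕ, s ≤ #(Finset.powersetCard r (univ : Finset (Fin n0))) →
    ∃ 𝒞 : Finset (Finset (Fin n0)), 𝒞 ⊆ Finset.powersetCard r univ ∧ #𝒞 = s ∧
      Finset.Colex.IsInitSeg 𝒞 r := by
  intro s
  induction s with
  | zero => exact fun _ => ⟨∅, Finset.empty_subset _, Finset.card_empty, by simp⟩
  | succ s ih =>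
    intro hs
    obtain ⟨𝒞, hsub, hcard, hseg⟩ := ih (by omega)
    have hdiffne : (Finset.powersetCard r (univ : Finset (Fin n0)) \ 𝒞).Nonempty := by
      rw [← Finset.card_pos, Finset.card_sdiff_of_subset hsub, hcard]
      omega
    obtain ⟨M, hM, hMmin⟩ := Finset.exists_min_image _ (fun A => toColex A) hdiffne
    obtain ⟨hMpow, hM𝒞⟩ := Finset.mem_sdiff.1 hM
    refine ⟨insert M 𝒞, ?_, ?_, ?_, ?_⟩
    · exact Finset.insert_subset hMpow hsub
    · rw [Finset.card_insert_of_notMem hM𝒞, hcard]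
    · -- sized
      intro A hA
      rcases Finset.mem_insert.1 hA with rfl | hA
      · exact (Finset.mem_powersetCard.1 hMpow).2
      · exact hseg.1 hA
    · intro A B hA hB
      rcases Finset.mem_insert.1 hA with rfl | hA'
      · by_cases hB𝒞 : B ∈ 𝒞
        · exact Finset.mem_insert_of_mem hB𝒞
        · exfalso
          have hBpow : B ∈ Finset.powersetCard r (univ : Finset (Fin n0)) :=
            Finset.mem_powersetCard.2 ⟨Finset.subset_univ _, hB.2⟩
          have := hMmin B (Finset.mem_sdiff.2 ⟨hBpow, hB𝒞⟩)
          exact absurd hB.1 (not_lt.2 this)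
      · exact Finset.mem_insert_of_mem (hseg.2 hA' hB)

lemma initSeg_in_erase_top {r : ℕ} (hr : 1 ≤ r) {𝒞 : Finset (Finset (Fin (2*r)))}
    (hseg : Finset.Colex.IsInitSeg 𝒞 r) (hcard : #𝒞 ≤ (2*r-1).choose (r-1)) :
    𝒞 ⊆ Finset.powersetCard r ((univ : Finset (Fin (2*r))).erase ⟨2*r-1, by omega⟩) := by
  set z : Fin (2*r) := ⟨2*r-1, by omega⟩ with hz
  intro A hA
  rw [Finset.mem_powersetCard]
  refine ⟨?_, hseg.1 hA⟩
  rw [Finset.subset_erase]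
  refine ⟨Finset.subset_univ _, ?_⟩
  intro hzA
  -- all r-sets avoiding z are colex-below A, hence in 𝒞
  have hsubP : Finset.powersetCard r ((univ : Finset (Fin (2*r))).erase z) ⊆ 𝒞 := by
    intro B hB
    rw [Finset.mem_powersetCard] at hB
    have hzB : z ∉ B := fun h => (Finset.mem_erase.1 (hB.1 h)).1 rfl
    have hlt : toColex B < toColex A := by
      rw [toColex_lt_toColex_iff_exists_forall_lt]
      refine ⟨z, hzA, hzB, ?_⟩
      intro b hbB _
      have hb2 : (b : ℕ) < 2*r := b.2
      have hbz : b ≠ z := fun h => hzB (h ▸ hbB)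
      have : (b : ℕ) ≠ 2*r-1 := fun h => hbz (Fin.ext h)
      rw [Fin.lt_def]
      simp only [hz]
      omega
    exact hseg.2 hA ⟨hlt, hB.2⟩
  have hAP : A ∉ Finset.powersetCard r ((univ : Finset (Fin (2*r))).erase z) := by
    intro h
    rw [Finset.mem_powersetCard, Finset.subset_erase] at h
    exact h.1.2 hzA
  have hcardP : #(Finset.powersetCard r ((univ : Finset (Fin (2*r))).erase z))
      = (2*r-1).choose (r-1) := by
    rw [Finset.card_powersetCard, Finset.card_erase_of_mem (Finset.mem_univ _)]
    rw [Finset.card_univ, Fintype.card_fin]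
    have h1 : 2*r-1-r = r-1 := by omega
    rw [← h1, Nat.choose_symm (by omega)]
  have : #(insert A (Finset.powersetCard r ((univ : Finset (Fin (2*r))).erase z))) ≤ #𝒞 :=
    Finset.card_le_card (Finset.insert_subset hA hsubP)
  rw [Finset.card_insert_of_notMem hAP, hcardP] at this
  omega

lemma mid_ge {r : ℕ} (hr : 1 ≤ r) {K : Finset (Finset (Fin (2*r)))}
    (hK : K ⊆ Finset.powersetCard r univ) (hsize : #K ≤ (2*r-1).choose (r-1)) :
    #K ≤ #(∂ K) := by
  have htot : #K ≤ #(Finset.powersetCard r (univ : Finset (Fin (2*r)))) := by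
    exact Finset.card_le_card hK
  obtain ⟨𝒞, hsub, hcard, hseg⟩ := exists_initSeg (2*r) r #K htot
  have hKsized : (K : Set (Finset (Fin (2*r)))).Sized r :=
    fun A hA => (Finset.mem_powersetCard.1 (hK hA)).2
  have hkk : #(∂ 𝒞) ≤ #(∂ K) := Finset.kruskal_katona hKsized (le_of_eq hcard) hseg
  have h𝒞V := initSeg_in_erase_top hr hseg (by omega)
  have hV : #((univ : Finset (Fin (2*r))).erase ⟨2*r-1, by omega⟩) = 2*r - 1 := by
    rw [Finset.card_erase_of_mem (Finset.mem_univ _), Finset.card_univ, Fintype.card_fin]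
  have hdc := dc_card_le hr hV h𝒞V
  omega

lemma mid_eq {r : ℕ} (hr : 1 ≤ r) {K : Finset (Finset (Fin (2*r)))}
    (hK : K ⊆ Finset.powersetCard r univ) (hsize : #K ≤ (2*r-1).choose (r-1))
    (hle : #(∂ K) ≤ #K) (hne : K.Nonempty) :
    #K = (2*r-1).choose (r-1) := by
  have htot : #K ≤ #(Finset.powersetCard r (univ : Finset (Fin (2*r)))) :=
    Finset.card_le_card hK
  obtain ⟨𝒞, hsub, hcard, hseg⟩ := exists_initSeg (2*r) r #K htot
  have hKsized : (K : Set (Finset (Fin (2*r)))).Sized r :=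
    fun A hA => (Finset.mem_powersetCard.1 (hK hA)).2
  have hkk : #(∂ 𝒞) ≤ #(∂ K) := Finset.kruskal_katona hKsized (le_of_eq hcard) hseg
  have h𝒞V := initSeg_in_erase_top hr hseg (by omega)
  have hV : #((univ : Finset (Fin (2*r))).erase ⟨2*r-1, by omega⟩) = 2*r - 1 := by
    rw [Finset.card_erase_of_mem (Finset.mem_univ _), Finset.card_univ, Fintype.card_fin]
  have h𝒞ne : 𝒞.Nonempty := by
    rw [← Finset.card_pos, hcard, Finset.card_pos]; exact hne
  have heq := dc_eq hr hV h𝒞V (by omega) h𝒞ne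
  have : #𝒞 = (2*r-1).choose (r-1) := by
    rw [heq, Finset.card_powersetCard, hV]
    have h1 : 2*r-1-r = r-1 := by omega
    rw [← h1, Nat.choose_symm (by omega)]
  omega

lemma complfree_card {r : ℕ} (hr : 1 ≤ r) {K : Finset (Finset (Fin (2*r)))}
    (hK : K ⊆ Finset.powersetCard r univ)
    (hcf : ∀ A ∈ K, univ \ A ∉ K) : #K ≤ (2*r-1).choose (r-1) := by
  classical
  set K' := K.image (fun A => (univ : Finset (Fin (2*r))) \ A) with hK'
  have hinj : Function.Injective (fun A => (univ : Finset (Fin (2*r))) \ A) := by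
    intro A B h
    have hA : univ \ (univ \ A) = A := by
      rw [Finset.sdiff_sdiff_self_left, Finset.univ_inter]
    have hB : univ \ (univ \ B) = B := by
      rw [Finset.sdiff_sdiff_self_left, Finset.univ_inter]
    rw [← hA, ← hB]
    simp only at h
    rw [h]
  have hcardK' : #K' = #K := Finset.card_image_of_injective _ hinj
  have hdisj : Disjoint K K' := by
    rw [Finset.disjoint_left]
    intro B hBK hBK'
    obtain ⟨A, hAK, hAB⟩ := Finset.mem_image.1 hBK'
    exact hcf A hAK (hAB ▸ hBK)
  have hK'sub : K' ⊆ Finset.powersetCard r univ := by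
    intro B hB
    obtain ⟨A, hAK, rfl⟩ := Finset.mem_image.1 hB
    rw [Finset.mem_powersetCard]
    refine ⟨Finset.subset_univ _, ?_⟩
    rw [Finset.card_sdiff_of_subset (Finset.subset_univ _), Finset.card_univ, Fintype.card_fin,
      (Finset.mem_powersetCard.1 (hK hAK)).2]
    omega
  have hunion : #K + #K' = #(K ∪ K') := (Finset.card_union_of_disjoint hdisj).symm
  have htot : #(K ∪ K') ≤ (2*r).choose r := by
    have : K ∪ K' ⊆ Finset.powersetCard r univ := Finset.union_subset hK hK'sub
    calc #(K ∪ K') ≤ #(Finset.powersetCard r (univ : Finset (Fin (2*r)))) :=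
          Finset.card_le_card this
      _ = (2*r).choose r := by
          rw [Finset.card_powersetCard, Finset.card_univ, Fintype.card_fin]
  have hpascal : (2*r).choose r = (2*r-1).choose (r-1) + (2*r-1).choose r := by
    have h := Nat.choose_succ_succ' (2*r-1) (r-1)
    have h2 : 2*r-1+1 = 2*r := by omega
    have h3 : r-1+1 = r := by omega
    rw [h2, h3] at h
    exact h
  have hsymm : (2*r-1).choose r = (2*r-1).choose (r-1) := by
    have h1 : 2*r-1-r = r-1 := by omega
    rw [← h1, Nat.choose_symm (by omega)]
  omega

section Push
variable {γ : Type*} [DecidableEq γ] [Fintype γ]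

def Anti (F : Finset (Finset γ)) : Prop := ∀ A ∈ F, ∀ B ∈ F, A ≠ B → ¬ A ⊆ B

def CoInt (F : Finset (Finset γ)) : Prop :=
  ∀ A ∈ F, ∀ B ∈ F, A ≠ B → A ∪ B ≠ univ

lemma Anti.isAntichain {F : Finset (Finset γ)} (h : Anti F) :
    IsAntichain (· ⊆ ·) (F : Set (Finset γ)) :=
  fun A hA B hB hne => h A hA B hB hne

lemma anti_singleton_of_univ_mem {F : Finset (Finset γ)} (hA : Anti F)
    (huniv : (univ : Finset γ) ∈ F) : F ⊆ {univ} := by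
  intro B hB
  rw [Finset.mem_singleton]
  by_contra hne
  exact hA B hB univ huniv hne (Finset.subset_univ B)

lemma push_props {F : Finset (Finset γ)} {c : ℕ} (hc : 1 ≤ c)
    (hA : Anti F) (hcoi : CoInt F) (huniv : (univ : Finset γ) ∉ F)
    (hmax : ∀ A ∈ F, #A ≤ c) :
    Anti ((F.filter (fun A => ¬ #A = c)) ∪ ∂ (F.filter (fun A => #A = c))) ∧
    CoInt ((F.filter (fun A => ¬ #A = c)) ∪ ∂ (F.filter (fun A => #A = c))) ∧
    #((F.filter (fun A => ¬ #A = c)) ∪ ∂ (F.filter (fun A => #A = c)))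
      = #(F.filter (fun A => ¬ #A = c)) + #(∂ (F.filter (fun A => #A = c))) ∧
    (∀ A ∈ (F.filter (fun A => ¬ #A = c)) ∪ ∂ (F.filter (fun A => #A = c)), #A ≤ c - 1) := by
  classical
  set K := F.filter (fun A => #A = c) with hK
  set G := F.filter (fun A => ¬ #A = c) with hG
  have hKsized : ∀ A ∈ K, #A = c := fun A hA => (Finset.mem_filter.1 hA).2
  have hKF : K ⊆ F := Finset.filter_subset _ _
  have hGF : G ⊆ F := Finset.filter_subset _ _
  have hGc : ∀ A ∈ G, ¬ #A = c := fun A hA => (Finset.mem_filter.1 hA).2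
  have hShSized : ∀ D ∈ ∂ K, #D = c - 1 := fun D hD =>
    (Set.Sized.shadow (fun A hA => hKsized A hA)) hD
  have hcover : ∀ D ∈ ∂ K, ∃ B ∈ K, D ⊆ B ∧ D ≠ B := by
    intro D hD
    rw [Finset.mem_shadow_iff_insert_mem] at hD
    obtain ⟨a, haD, hins⟩ := hD
    exact ⟨insert a D, hins, Finset.subset_insert _ _,
      fun h => haD (h ▸ Finset.mem_insert_self a D)⟩
  have hdisj : Disjoint G (∂ K) := by
    rw [Finset.disjoint_left]
    intro D hDG hDSh
    obtain ⟨B, hBK, hDB, hDneB⟩ := hcover D hDSh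
    exact hA D (hGF hDG) B (hKF hBK) hDneB hDB
  have hsizes : ∀ A ∈ G ∪ ∂ K, #A ≤ c - 1 := by
    intro A hAm
    rcases Finset.mem_union.1 hAm with h | h
    · have h1 := hmax A (hGF h)
      have h2 := hGc A h
      omega
    · rw [hShSized A h]
  refine ⟨?_, ?_, ?_, hsizes⟩
  · -- Anti
    intro X hX Y hY hne hsub
    rcases Finset.mem_union.1 hX with hXG | hXS
    · rcases Finset.mem_union.1 hY with hYG | hYS
      · exact hA X (hGF hXG) Y (hGF hYG) hne hsub
      · obtain ⟨B, hBK, hYB, hYneB⟩ := hcover Y hYS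
        have hXB : X ⊆ B := hsub.trans hYB
        have hXneB : X ≠ B := by
          intro h
          exact hGc X hXG (h ▸ hKsized B hBK)
        exact hA X (hGF hXG) B (hKF hBK) hXneB hXB
    · rcases Finset.mem_union.1 hY with hYG | hYS
      · have h1 : #X = c - 1 := hShSized X hXS
        have h2 : #Y ≤ c := hmax Y (hGF hYG)
        have h3 : ¬ #Y = c := hGc Y hYG
        have : X = Y := Finset.eq_of_subset_of_card_le hsub (by omega)
        exact hne this
      · obtain ⟨B, hBK, hYB, _⟩ := hcover Y hYS
        have h1 : #X = c - 1 := hShSized X hXS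
        have h2 : #Y = c - 1 := hShSized Y hYS
        have : X = Y := Finset.eq_of_subset_of_card_le hsub (by omega)
        exact hne this
  · -- CoInt
    intro X hX Y hY hne hun
    have getW : ∀ Z ∈ (G ∪ ∂ K), ∃ W ∈ F, Z ⊆ W := by
      intro Z hZ
      rcases Finset.mem_union.1 hZ with hZG | hZS
      · exact ⟨Z, hGF hZG, Finset.Subset.refl _⟩
      · obtain ⟨B, hBK, hZB, _⟩ := hcover Z hZS
        exact ⟨B, hKF hBK, hZB⟩
    obtain ⟨WX, hWXF, hXW⟩ := getW X hX
    obtain ⟨WY, hWYF, hYW⟩ := getW Y hY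
    have hsub : (univ : Finset γ) ⊆ WX ∪ WY := by
      rw [← hun]; exact Finset.union_subset_union hXW hYW
    have huneq : WX ∪ WY = univ := Finset.univ_subset_iff.1 hsub
    by_cases hWeq : WX = WY
    · rw [hWeq, Finset.union_self] at huneq
      exact huniv (huneq ▸ hWYF)
    · exact hcoi WX hWXF WY hWYF hWeq huneq
  · exact Finset.card_union_of_disjoint hdisj

end Push


lemma filter_univ_notmem_singleton {γ : Type*} [DecidableEq γ] [Fintype γ]
    {F : Finset (Finset γ)} (hA : Anti F) (huniv : (univ : Finset γ) ∈ F)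
    : #F ≤ 1 := by
  calc #F ≤ #({univ} : Finset (Finset γ)) :=
        Finset.card_le_card (anti_singleton_of_univ_mem hA huniv)
    _ = 1 := Finset.card_singleton _

lemma complfree_of_coint {γ : Type*} [DecidableEq γ] [Fintype γ]
    {F : Finset (Finset γ)} (hcoi : CoInt F) {c : ℕ} (hc : 1 ≤ c)
    (hne : Fintype.card γ ≠ c) :
    ∀ A ∈ F.filter (fun A => #A = c), univ \ A ∉ F.filter (fun A => #A = c) := by
  intro A hAK hcK
  have hAF : A ∈ F := Finset.filter_subset _ _ hAK
  have hcF : univ \ A ∈ F := Finset.filter_subset _ _ hcK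
  have hAne : A.Nonempty := by
    rw [← Finset.card_pos, (Finset.mem_filter.1 hAK).2]; omega
  obtain ⟨a, ha⟩ := hAne
  have hne' : A ≠ univ \ A := by
    intro h
    have : a ∈ univ \ A := h ▸ ha
    exact (Finset.mem_sdiff.1 this).2 ha
  exact hcoi A hAF (univ \ A) hcF hne' (by
    rw [Finset.union_sdiff_of_subset (Finset.subset_univ _)])

lemma odd_bound {r : ℕ} (hr : 2 ≤ r) :
    ∀ d : ℕ, ∀ F : Finset (Finset (Fin (2*r))), Anti F → CoInt F →
    (∀ A ∈ F, #A ≤ r + d) → #F ≤ (2*r).choose (r-1) := by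
  intro d
  induction d with
  | zero =>
    intro F hA hcoi hmax
    have huniv : (univ : Finset (Fin (2*r))) ∉ F := by
      intro h
      have := hmax univ h
      rw [Finset.card_univ, Fintype.card_fin] at this
      omega
    have hKsub : F.filter (fun A => #A = r) ⊆ Finset.powersetCard r univ := by
      intro A hAK
      exact Finset.mem_powersetCard.2 ⟨Finset.subset_univ _, (Finset.mem_filter.1 hAK).2⟩
    have hcf := complfree_of_coint hcoi (c := r) (by omega)
      (by rw [Fintype.card_fin]; omega)
    have hKH : #(F.filter (fun A => #A = r)) ≤ (2*r-1).choose (r-1) :=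
      complfree_card (by omega) hKsub hcf
    have hmid : #(F.filter (fun A => #A = r)) ≤ #(∂ (F.filter (fun A => #A = r))) :=
      mid_ge (by omega) hKsub hKH
    obtain ⟨hA', _, hcard', hsizes'⟩ := push_props (c := r) (by omega) hA hcoi huniv hmax
    have hsplit : #(F.filter (fun A => #A = r)) + #(F.filter (fun A => ¬ #A = r)) = #F :=
      Finset.card_filter_add_card_filter_not _
    have hlym := lym_bound (b := r - 1) hA'.isAntichain (by
      intro A hAm
      have := hsizes' A hAm
      apply choose_mono_below
      · omega
      · rw [Fintype.card_fin]; omega)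
    rw [Fintype.card_fin] at hlym
    omega
  | succ d ih =>
    intro F hA hcoi hmax
    by_cases hKe : F.filter (fun A => #A = r + d + 1) = ∅
    · apply ih F hA hcoi
      intro A hAF
      have h1 := hmax A hAF
      rcases Nat.lt_or_ge #A (r + d + 1) with h | h
      · omega
      · exfalso
        have : A ∈ F.filter (fun A => #A = r + d + 1) :=
          Finset.mem_filter.2 ⟨hAF, by omega⟩
        rw [hKe] at this
        exact absurd this (Finset.notMem_empty A)
    · by_cases huniv : (univ : Finset (Fin (2*r))) ∈ F
      · have h1 := filter_univ_notmem_singleton hA huniv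
        have h2 : 0 < (2*r).choose (r-1) := Nat.choose_pos (by omega)
        omega
      · have hKne : (F.filter (fun A => #A = r + d + 1)).Nonempty :=
          Finset.nonempty_iff_ne_empty.2 hKe
        have hKsized : ((F.filter (fun A => #A = r + d + 1)) :
            Set (Finset (Fin (2*r)))).Sized (r+d+1) :=
          fun A hA => (Finset.mem_filter.1 hA).2
        have hdr : d + 1 ≤ r := by
          obtain ⟨A, hAK⟩ := hKne
          have h1 : #A = r + d + 1 := (Finset.mem_filter.1 hAK).2
          have h2 : #A ≤ 2*r := by
            calc #A ≤ #(univ : Finset (Fin (2*r))) := Finset.card_le_univ A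
              _ = 2*r := by rw [Finset.card_univ, Fintype.card_fin]
          omega
        have hllym := Finset.card_mul_le_card_shadow_mul hKsized
        rw [Fintype.card_fin] at hllym
        have h1 : 2*r - (r+d+1) + 1 = r - d := by omega
        rw [h1] at hllym
        have hKsh : #(F.filter (fun A => #A = r + d + 1))
            ≤ #(∂ (F.filter (fun A => #A = r + d + 1))) := by
          by_contra hcon
          push_neg at hcon
          have h2 : #(∂ (F.filter (fun A => #A = r + d + 1))) * (r - d)
              < #(F.filter (fun A => #A = r + d + 1)) * (r - d) :=
            mul_lt_mul_of_pos_right hcon (by omega)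
          have h3 : #(F.filter (fun A => #A = r + d + 1)) * (r - d)
              ≤ #(F.filter (fun A => #A = r + d + 1)) * (r + d + 1) :=
            Nat.mul_le_mul le_rfl (by omega)
          omega
        obtain ⟨hA', hcoi', hcard', hsizes'⟩ :=
          push_props (c := r + d + 1) (by omega) hA hcoi huniv hmax
        have hsplit : #(F.filter (fun A => #A = r + d + 1))
            + #(F.filter (fun A => ¬ #A = r + d + 1)) = #F :=
          Finset.card_filter_add_card_filter_not _
        have hih := ih _ hA' hcoi' (by
          intro A hAm
          have := hsizes' A hAm
          omega)
        omega

lemma odd_structure {r : ℕ} (hr : 2 ≤ r) {F : Finset (Finset (Fin (2*r)))}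
    (hA : Anti F) (hcoi : CoInt F) (hcard : #F = (2*r).choose (r-1)) :
    (∀ A ∈ F, #A = r - 1 ∨ #A = r) ∧
    (F.filter (fun A => #A = r) = ∅ ∨
      #(F.filter (fun A => #A = r)) = (2*r-1).choose (r-1)) := by
  classical
  have hN2 : 2*r ≤ (2*r).choose (r-1) := by
    have h1 : (2*r).choose 1 ≤ (2*r).choose (r-1) := by
      apply choose_mono_below <;> omega
    rw [Nat.choose_one_right] at h1
    exact h1
  have huniv : (univ : Finset (Fin (2*r))) ∉ F := by
    intro h
    have h1 := filter_univ_notmem_singleton hA h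
    omega
  have hFne : F.Nonempty := by
    rw [← Finset.card_pos, hcard]
    have := Nat.choose_pos (show r - 1 ≤ 2*r by omega)
    omega
  -- no sets of size > r
  have hbig : ∀ A ∈ F, #A ≤ r := by
    by_contra hcon
    push_neg at hcon
    obtain ⟨A0, hA0F, hA0big⟩ := hcon
    have hSne : (F.image (fun A => #A)).Nonempty := hFne.image _
    obtain ⟨Ac, hAcF, hAcc⟩ := Finset.mem_image.1 (Finset.max'_mem (F.image (fun A => #A)) hSne)
    set c := (F.image (fun A => #A)).max' hSne with hcdef
    have hcmax : ∀ A ∈ F, #A ≤ c :=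
      fun A hAF => Finset.le_max' _ _ (Finset.mem_image_of_mem _ hAF)
    have hcr : r + 1 ≤ c := le_trans hA0big (hcmax A0 hA0F)
    have hc2r : c ≤ 2*r := by
      rw [← hAcc]
      calc #Ac ≤ #(univ : Finset (Fin (2*r))) := Finset.card_le_univ Ac
        _ = 2*r := by rw [Finset.card_univ, Fintype.card_fin]
    have hKne : (F.filter (fun A => #A = c)).Nonempty :=
      ⟨Ac, Finset.mem_filter.2 ⟨hAcF, hAcc⟩⟩
    have hKsized : ((F.filter (fun A => #A = c)) : Set (Finset (Fin (2*r)))).Sized c :=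
      fun A hA => (Finset.mem_filter.1 hA).2
    have hllym := Finset.card_mul_le_card_shadow_mul hKsized
    rw [Fintype.card_fin] at hllym
    have h1 : 2*r - c + 1 = r - (c - r - 1) := by omega
    rw [h1] at hllym
    have hKsh : #(F.filter (fun A => #A = c)) < #(∂ (F.filter (fun A => #A = c))) := by
      by_contra hcon2
      push_neg at hcon2
      have h2 : #(∂ (F.filter (fun A => #A = c))) * (r - (c - r - 1))
          ≤ #(F.filter (fun A => #A = c)) * (r - (c - r - 1)) :=
        Nat.mul_le_mul_right _ hcon2
      have h3 : #(F.filter (fun A => #A = c)) * (r - (c - r - 1))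
          < #(F.filter (fun A => #A = c)) * c :=
        mul_lt_mul_of_pos_left (by omega) (Finset.card_pos.2 hKne)
      omega
    obtain ⟨hA', hcoi', hcard', hsizes'⟩ :=
      push_props (c := c) (by omega) hA hcoi huniv hcmax
    have hsplit : #(F.filter (fun A => #A = c))
        + #(F.filter (fun A => ¬ #A = c)) = #F :=
      Finset.card_filter_add_card_filter_not _
    have hbound := odd_bound hr (c - 1 - r) _ hA' hcoi' (by
      intro A hAm
      have := hsizes' A hAm
      omega)
    omega
  -- the level-r part
  have hKsub : F.filter (fun A => #A = r) ⊆ Finset.powersetCard r univ := by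
    intro A hAK
    exact Finset.mem_powersetCard.2 ⟨Finset.subset_univ _, (Finset.mem_filter.1 hAK).2⟩
  have hcf := complfree_of_coint hcoi (c := r) (by omega)
    (by rw [Fintype.card_fin]; omega)
  have hKH : #(F.filter (fun A => #A = r)) ≤ (2*r-1).choose (r-1) :=
    complfree_card (by omega) hKsub hcf
  have hmid : #(F.filter (fun A => #A = r)) ≤ #(∂ (F.filter (fun A => #A = r))) :=
    mid_ge (by omega) hKsub hKH
  obtain ⟨hA', hcoi', hcard', hsizes'⟩ :=
    push_props (c := r) (by omega) hA hcoi huniv hbig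
  have hsplit : #(F.filter (fun A => #A = r)) + #(F.filter (fun A => ¬ #A = r)) = #F :=
    Finset.card_filter_add_card_filter_not _
  have hlym := lym_bound (b := r - 1) hA'.isAntichain (by
    intro A hAm
    have := hsizes' A hAm
    apply choose_mono_below
    · omega
    · rw [Fintype.card_fin]; omega)
  rw [Fintype.card_fin] at hlym
  have hsheq : #(∂ (F.filter (fun A => #A = r))) = #(F.filter (fun A => #A = r)) := by
    omega
  constructor
  · -- sizes in {r-1, r}
    intro A hAF
    by_contra hcon2
    push_neg at hcon2
    have hAsmall : #A ≤ r - 2 := by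
      have := hbig A hAF
      omega
    have hAG : A ∈ F.filter (fun A => ¬ #A = r) :=
      Finset.mem_filter.2 ⟨hAF, by omega⟩
    have hAmem : A ∈ (F.filter (fun A => ¬ #A = r)) ∪ ∂ (F.filter (fun A => #A = r)) :=
      Finset.mem_union_left _ hAG
    have hstrict := lym_bound_strict (b := r - 1) hA'.isAntichain (by
        intro B hBm
        have := hsizes' B hBm
        apply choose_mono_below
        · omega
        · rw [Fintype.card_fin]; omega) hAmem (by
        rw [Fintype.card_fin]
        apply choose_strict_below <;> omega)
    rw [Fintype.card_fin] at hstrict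
    omega
  · rcases Finset.eq_empty_or_nonempty (F.filter (fun A => #A = r)) with h | hKne
    · exact Or.inl h
    · exact Or.inr (mid_eq (by omega) hKsub hKH (by omega) hKne)


end CAWork

namespace CAWork
open Finset
open scoped FinsetFamily

lemma even_struct {γ : Type*} [DecidableEq γ] [Fintype γ] {s : ℕ} (hs : 1 ≤ s)
    (hγ : Fintype.card γ = 2*s+1) {F : Finset (Finset γ)}
    (hA : Anti F) (hcoi : CoInt F) (hcard : #F = (2*s+1).choose s) :
    ∀ A ∈ F, #A = s := by
  classical
  have hchoosemax : ∀ j, (2*s+1).choose j ≤ (2*s+1).choose s := by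
    intro j
    have := Nat.choose_le_middle j (2*s+1)
    have h2 : (2*s+1)/2 = s := by omega
    rwa [h2] at this
  -- sizes are in {s, s+1}
  have hsizes : ∀ A ∈ F, #A = s ∨ #A = s + 1 := by
    intro A hAF
    by_contra hcon
    push_neg at hcon
    have hAle : #A ≤ 2*s+1 := by
      calc #A ≤ #(univ : Finset γ) := Finset.card_le_univ A
        _ = 2*s+1 := by rw [Finset.card_univ, hγ]
    have hstrictA : (2*s+1).choose #A < (2*s+1).choose s := by
      rcases Nat.lt_or_ge #A s with h | h
      · exact choose_strict_below h (by omega)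
      · have h2 : s + 2 ≤ #A := by omega
        have h3 : (2*s+1).choose #A = (2*s+1).choose (2*s+1-#A) := by
          rw [Nat.choose_symm hAle]
        rw [h3]
        exact choose_strict_below (by omega) (by omega)
    have hstrict := lym_bound_strict (b := s) hA.isAntichain (by
        intro B hBF
        rw [hγ]
        exact hchoosemax _) hAF (by rw [hγ]; exact hstrictA)
    rw [hγ] at hstrict
    omega
  -- the top slice must be empty
  have hKsub : F.filter (fun A => #A = s+1) ⊆ Finset.powersetCard (s+1) univ := by
    intro A hAK
    exact Finset.mem_powersetCard.2 ⟨Finset.subset_univ _, (Finset.mem_filter.1 hAK).2⟩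
  have hVcard : #(univ : Finset γ) = 2*(s+1)-1 := by
    rw [Finset.card_univ, hγ]; omega
  have hsplit : #(F.filter (fun A => #A = s+1)) + #(F.filter (fun A => ¬ #A = s+1)) = #F :=
    Finset.card_filter_add_card_filter_not _
  -- shadow of top slice is disjoint from bottom slice, both sized s
  have hdisj : Disjoint (∂ (F.filter (fun A => #A = s+1))) (F.filter (fun A => ¬ #A = s+1)) := by
    rw [Finset.disjoint_left]
    intro D hDsh hDF
    rw [Finset.mem_shadow_iff_insert_mem] at hDsh
    obtain ⟨a, haD, hins⟩ := hDsh
    have hinsF : insert a D ∈ F := Finset.filter_subset _ _ hins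
    have hDF' : D ∈ F := Finset.filter_subset _ _ hDF
    exact hA D hDF' (insert a D) hinsF
      (fun h => haD (h ▸ Finset.mem_insert_self a D)) (Finset.subset_insert _ _)
  have hbotsized : ∀ D ∈ F.filter (fun A => ¬ #A = s+1), #D = s := by
    intro D hD
    rw [Finset.mem_filter] at hD
    rcases hsizes D hD.1 with h | h
    · exact h
    · exact absurd h hD.2
  have hShSized : ∀ D ∈ ∂ (F.filter (fun A => #A = s+1)), #D = s := by
    intro D hD
    have := (Set.Sized.shadow (fun A hA => (Finset.mem_filter.1 hA).2)) hD
    simpa using this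
  have hunion_sub : (∂ (F.filter (fun A => #A = s+1))) ∪ (F.filter (fun A => ¬ #A = s+1))
      ⊆ Finset.powersetCard s univ := by
    intro D hD
    rcases Finset.mem_union.1 hD with h | h
    · exact Finset.mem_powersetCard.2 ⟨Finset.subset_univ _, hShSized D h⟩
    · exact Finset.mem_powersetCard.2 ⟨Finset.subset_univ _, hbotsized D h⟩
  have hcount : #(∂ (F.filter (fun A => #A = s+1))) + #(F.filter (fun A => ¬ #A = s+1))
      ≤ (2*s+1).choose s := by
    rw [← Finset.card_union_of_disjoint hdisj]
    calc #((∂ (F.filter (fun A => #A = s+1))) ∪ (F.filter (fun A => ¬ #A = s+1)))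
        ≤ #(Finset.powersetCard s (univ : Finset γ)) := Finset.card_le_card hunion_sub
      _ = (2*s+1).choose s := by
          rw [Finset.card_powersetCard, Finset.card_univ, hγ]
  have hshle : #(∂ (F.filter (fun A => #A = s+1))) ≤ #(F.filter (fun A => #A = s+1)) := by
    omega
  rcases Finset.eq_empty_or_nonempty (F.filter (fun A => #A = s+1)) with hKe | hKne
  · intro A hAF
    rcases hsizes A hAF with h | h
    · exact h
    · exfalso
      have : A ∈ F.filter (fun A => #A = s+1) := Finset.mem_filter.2 ⟨hAF, h⟩
      rw [hKe] at this
      exact absurd this (Finset.notMem_empty A)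
  · exfalso
    have hKfull := dc_eq (t := s+1) (by omega) hVcard hKsub hshle hKne
    have hKcard : #(F.filter (fun A => #A = s+1)) = (2*s+1).choose (s+1) := by
      rw [hKfull, Finset.card_powersetCard, Finset.card_univ, hγ]
    have hhalf : (2*s+1).choose (s+1) = (2*s+1).choose s := Nat.choose_symm_half s
    have hbotempty : #(F.filter (fun A => ¬ #A = s+1)) = 0 := by omega
    -- so F is the full level s+1; contradict CoInt
    obtain ⟨A, hAsub, hAcard⟩ := Finset.exists_subset_card_eq (s := (univ : Finset γ)) (n := s+1)
      (by rw [Finset.card_univ, hγ]; omega)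
    have hAne : A.Nonempty := by rw [← Finset.card_pos, hAcard]; omega
    obtain ⟨a0, ha0⟩ := hAne
    have hAF : A ∈ F := by
      have : A ∈ Finset.powersetCard (s+1) univ :=
        Finset.mem_powersetCard.2 ⟨Finset.subset_univ _, hAcard⟩
      rw [← hKfull] at this
      exact Finset.filter_subset _ _ this
    have hBcard : #(insert a0 (univ \ A)) = s + 1 := by
      rw [Finset.card_insert_of_notMem (by
        rw [Finset.mem_sdiff]
        exact fun h => h.2 ha0)]
      rw [Finset.card_sdiff_of_subset (Finset.subset_univ _), Finset.card_univ, hγ, hAcard]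
      omega
    have hBF : insert a0 (univ \ A) ∈ F := by
      have : insert a0 (univ \ A) ∈ Finset.powersetCard (s+1) univ :=
        Finset.mem_powersetCard.2 ⟨Finset.subset_univ _, hBcard⟩
      rw [← hKfull] at this
      exact Finset.filter_subset _ _ this
    obtain ⟨a1, ha1A, ha1ne⟩ := Finset.exists_mem_ne (by omega : 1 < #A) a0
    have hABne : A ≠ insert a0 (univ \ A) := by
      intro h
      have : a1 ∈ insert a0 (univ \ A) := h ▸ ha1A
      rcases Finset.mem_insert.1 this with h2 | h2
      · exact ha1ne h2
      · exact (Finset.mem_sdiff.1 h2).2 ha1A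
    have hunion : A ∪ insert a0 (univ \ A) = univ := by
      apply Finset.univ_subset_iff.1
      intro x _
      by_cases hx : x ∈ A
      · exact Finset.mem_union_left _ hx
      · exact Finset.mem_union_right _ (Finset.mem_insert_of_mem
          (Finset.mem_sdiff.2 ⟨Finset.mem_univ x, hx⟩))
    exact hcoi A hAF _ hBF hABne hunion

end CAWork

namespace CAWork
open Finset
open scoped FinsetFamily

lemma fin2_add_one_ne (x : Fin 2) : x + 1 ≠ x := by fin_cases x <;> decide
lemma fin2_eq_one {x : Fin 2} (h : ¬ x = 0) : x = 1 := by fin_cases x <;> simp_all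
lemma fin2_one_iff (y : Fin 2) : y = 1 ↔ ¬ y = 0 := by fin_cases y <;> simp

section Arrays
variable {n0 N : ℕ}

/-- the set of rows where column `i` agrees with its value in row `v` -/
def Pset (C : Fin (n0+1) → Fin N → Fin 2) (v : Fin (n0+1)) (i : Fin N) :
    Finset (Fin (n0+1)) := univ.filter (fun rr => C rr i = C v i)

/-- same, transferred off the row `v` to the ground `Fin n0` -/
def Aset (C : Fin (n0+1) → Fin N → Fin 2) (v : Fin (n0+1)) (i : Fin N) :
    Finset (Fin n0) := univ.filter (fun x => C (v.succAbove x) i = C v i)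

/-- pairwise covering property -/
def Cov (C : Fin (n0+1) → Fin N → Fin 2) : Prop :=
  ∀ i j : Fin N, i ≠ j → ∀ a b : Fin 2, ∃ rr, C rr i = a ∧ C rr j = b

lemma cov_of_isCoveringArray {C : Fin (n0+1) → Fin N → Fin 2}
    (hC : IsCoveringArray (n0+1) N 2 2 C) : Cov C := by
  intro i j hij a b
  have hinj : Function.Injective (fun t : Fin 2 => if t = 0 then i else j) := by
    intro t1 t2 h
    fin_cases t1 <;> fin_cases t2 <;> simp_all
  obtain ⟨rr, hrr⟩ := hC _ hinj (fun t => if t = 0 then a else b)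
  have h0 := hrr 0
  have h1 := hrr 1
  simp at h0 h1
  exact ⟨rr, h0, h1⟩

variable {C : Fin (n0+1) → Fin N → Fin 2}

lemma mem_Pset {v : Fin (n0+1)} {i : Fin N} {rr : Fin (n0+1)} :
    rr ∈ Pset C v i ↔ C rr i = C v i := by
  simp [Pset]

lemma self_mem_Pset {v : Fin (n0+1)} {i : Fin N} : v ∈ Pset C v i := mem_Pset.2 rfl

lemma mem_Aset {v : Fin (n0+1)} {i : Fin N} {x : Fin n0} :
    x ∈ Aset C v i ↔ C (v.succAbove x) i = C v i := by
  simp [Aset]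

lemma Pset_eq_insert {v : Fin (n0+1)} {i : Fin N} :
    Pset C v i = insert v ((Aset C v i).image v.succAbove) := by
  ext rr
  rw [mem_Pset, Finset.mem_insert, Finset.mem_image]
  constructor
  · intro h
    by_cases hrv : rr = v
    · exact Or.inl hrv
    · obtain ⟨x, hx⟩ := Fin.exists_succAbove_eq hrv
      exact Or.inr ⟨x, mem_Aset.2 (by rw [hx]; exact h), hx⟩
  · rintro (rfl | ⟨x, hxA, rfl⟩)
    · rfl
    · exact mem_Aset.1 hxA

lemma Pset_card {v : Fin (n0+1)} {i : Fin N} :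
    #(Pset C v i) = #(Aset C v i) + 1 := by
  rw [Pset_eq_insert, Finset.card_insert_of_notMem (by
    rw [Finset.mem_image]
    rintro ⟨x, _, hx⟩
    exact Fin.succAbove_ne v x hx)]
  rw [Finset.card_image_of_injective _ (Fin.succAbove_right_injective)]

lemma Aset_injective (hcov : Cov C) (v : Fin (n0+1)) :
    Function.Injective (fun i => Aset C v i) := by
  intro i j h
  by_contra hij
  obtain ⟨rr, hri, hrj⟩ := hcov i j hij (C v i) (C v j + 1)
  have hrv : rr ≠ v := by
    intro hh
    rw [hh] at hrj
    exact fin2_add_one_ne _ hrj.symm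
  obtain ⟨x, hx⟩ := Fin.exists_succAbove_eq hrv
  have h1 : x ∈ Aset C v i := mem_Aset.2 (by rw [hx]; exact hri)
  have h2 : x ∉ Aset C v j := by
    rw [mem_Aset, hx, hrj]
    exact fin2_add_one_ne _
  have h' : Aset C v i = Aset C v j := h
  rw [h'] at h1
  exact h2 h1

lemma Pset_injective (hcov : Cov C) (v : Fin (n0+1)) :
    Function.Injective (fun i => Pset C v i) := by
  intro i j h
  by_contra hij
  obtain ⟨rr, hri, hrj⟩ := hcov i j hij (C v i) (C v j + 1)
  have h1 : rr ∈ Pset C v i := mem_Pset.2 hri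
  have h2 : rr ∉ Pset C v j := by
    rw [mem_Pset, hrj]
    exact fin2_add_one_ne _
  have h' : Pset C v i = Pset C v j := h
  rw [h'] at h1
  exact h2 h1

lemma fam_anti (hcov : Cov C) (v : Fin (n0+1)) :
    Anti (univ.image (fun i => Aset C v i)) := by
  intro X hX Y hY hne hsub
  obtain ⟨i, _, rfl⟩ := Finset.mem_image.1 hX
  obtain ⟨j, _, rfl⟩ := Finset.mem_image.1 hY
  have hij : i ≠ j := fun h => hne (by rw [h])
  obtain ⟨rr, hri, hrj⟩ := hcov i j hij (C v i) (C v j + 1)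
  have hrv : rr ≠ v := by
    intro hh
    rw [hh] at hrj
    exact fin2_add_one_ne _ hrj.symm
  obtain ⟨x, hx⟩ := Fin.exists_succAbove_eq hrv
  have h1 : x ∈ Aset C v i := mem_Aset.2 (by rw [hx]; exact hri)
  have h2 : x ∉ Aset C v j := by
    rw [mem_Aset, hx, hrj]
    exact fin2_add_one_ne _
  exact h2 (hsub h1)

lemma fam_coint (hcov : Cov C) (v : Fin (n0+1)) :
    CoInt (univ.image (fun i => Aset C v i)) := by
  intro X hX Y hY hne hun
  obtain ⟨i, _, rfl⟩ := Finset.mem_image.1 hX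
  obtain ⟨j, _, rfl⟩ := Finset.mem_image.1 hY
  have hij : i ≠ j := fun h => hne (by rw [h])
  obtain ⟨rr, hri, hrj⟩ := hcov i j hij (C v i + 1) (C v j + 1)
  have hrvi : rr ≠ v := by
    intro hh
    rw [hh] at hri
    exact fin2_add_one_ne _ hri.symm
  obtain ⟨x, hx⟩ := Fin.exists_succAbove_eq hrvi
  have h1 : x ∉ Aset C v i := by
    rw [mem_Aset, hx, hri]
    exact fin2_add_one_ne _
  have h2 : x ∉ Aset C v j := by
    rw [mem_Aset, hx, hrj]
    exact fin2_add_one_ne _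
  have : x ∈ Aset C v i ∪ Aset C v j := by
    rw [hun]
    exact Finset.mem_univ x
  rcases Finset.mem_union.1 this with h | h
  · exact h1 h
  · exact h2 h

lemma fam_card (hcov : Cov C) (v : Fin (n0+1)) :
    #(univ.image (fun i => Aset C v i)) = N := by
  rw [Finset.card_image_of_injective _ (Aset_injective hcov v), Finset.card_univ,
    Fintype.card_fin]

end Arrays

end CAWork


namespace CAWork
open Finset
open scoped FinsetFamily

lemma central_two {r : ℕ} (hr : 1 ≤ r) : (2*r).choose r = 2 * ((2*r-1).choose (r-1)) := by
  have h := Nat.choose_succ_succ' (2*r-1) (r-1)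
  rw [show 2*r-1+1 = 2*r by omega, show r-1+1 = r by omega] at h
  have hsymm : (2*r-1).choose r = (2*r-1).choose (r-1) := by
    rw [show r-1 = 2*r-1-r by omega]
    exact (Nat.choose_symm (by omega)).symm
  omega

lemma choose_id {r : ℕ} (hr : 1 ≤ r) :
    (2*r).choose (r-1) * (r+1) = (2*r) * ((2*r-1).choose (r-1)) := by
  have h1 := Nat.choose_succ_right_eq (2*r) (r-1)
  rw [show r-1+1 = r by omega, show 2*r - (r-1) = r+1 by omega] at h1
  have h2 := central_two hr
  calc (2*r).choose (r-1) * (r+1) = (2*r).choose r * r := h1.symm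
    _ = 2 * ((2*r-1).choose (r-1)) * r := by rw [h2]
    _ = (2*r) * ((2*r-1).choose (r-1)) := by ring

theorem main_struct {n0 N : ℕ} (hn0 : 3 ≤ n0) {C : Fin (n0+1) → Fin N → Fin 2}
    (hcov : Cov C) (hN : N = n0.choose ((n0+1)/2 - 1)) :
    ∃ v : Fin (n0+1), ∀ i, #(Pset C v i) = (n0+1)/2 := by
  classical
  rcases Nat.even_or_odd n0 with he | ho
  · -- n0 = 2r even, i.e. m odd
    obtain ⟨r, hrdef⟩ : ∃ r, n0 = 2*r := by
      obtain ⟨r, hr⟩ := he; exact ⟨r, by omega⟩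
    subst hrdef
    have hr2 : 2 ≤ r := by omega
    have hstruct : ∀ v : Fin (2*r+1),
        (∀ i, #(Aset C v i) = r - 1 ∨ #(Aset C v i) = r) ∧
        (#(univ.filter (fun i : Fin N => #(Aset C v i) = r)) = 0 ∨
          #(univ.filter (fun i : Fin N => #(Aset C v i) = r)) = (2*r-1).choose (r-1)) := by
      intro v
      have hcard : #(univ.image (fun i => Aset C v i)) = (2*r).choose (r-1) := by
        rw [fam_card hcov v, hN]
        congr 1
        omega
      obtain ⟨h1, h2⟩ := odd_structure hr2 (fam_anti hcov v) (fam_coint hcov v) hcard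
      have htrans : #((univ.image (fun i => Aset C v i)).filter (fun A => #A = r))
          = #(univ.filter (fun i : Fin N => #(Aset C v i) = r)) := by
        rw [Finset.filter_image, Finset.card_image_of_injective _ (Aset_injective hcov v)]
      constructor
      · intro i
        exact h1 _ (Finset.mem_image_of_mem _ (Finset.mem_univ i))
      · rcases h2 with h | h
        · left; rw [← htrans, h, Finset.card_empty]
        · right; rw [← htrans, h]
    have hbal : ∀ (i : Fin N) (v : Fin (2*r+1)),
        #(Aset C v i) = r - 1 ∨ #(Aset C v i) = r := fun i v => (hstruct v).1 i
    -- for each column, the number of rows `v` whose class is the big one is `r+1`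
    have hinner : ∀ i : Fin N,
        #(univ.filter (fun v : Fin (2*r+1) => #(Aset C v i) = r)) = r + 1 := by
      intro i
      set X := univ.filter (fun u : Fin (2*r+1) => C u i = 0) with hXdef
      set Y := univ.filter (fun u : Fin (2*r+1) => ¬ C u i = 0) with hYdef
      have hsplitXY : #X + #Y = 2*r+1 := by
        rw [hXdef, hYdef, Finset.card_filter_add_card_filter_not,
          Finset.card_univ, Fintype.card_fin]
      have hPX : ∀ v, C v i = 0 → Pset C v i = X := by
        intro v hv
        rw [hXdef]
        ext rr
        rw [mem_Pset, Finset.mem_filter, hv]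
        simp
      have hPY : ∀ v, ¬ C v i = 0 → Pset C v i = Y := by
        intro v hv
        rw [hYdef]
        ext rr
        rw [mem_Pset, Finset.mem_filter, fin2_eq_one hv]
        simp only [Finset.mem_univ, true_and]
        exact fin2_one_iff _
      have hPcard : ∀ v : Fin (2*r+1), #(Pset C v i) ≤ r + 1 := by
        intro v
        have h1 := hbal i v
        have h2 : #(Pset C v i) = #(Aset C v i) + 1 := Pset_card
        omega
      have hXne : X.Nonempty := by
        by_contra h
        rw [Finset.not_nonempty_iff_eq_empty, hXdef] at h
        have hall : ∀ u, ¬ C u i = 0 := by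
          intro u hu
          have : u ∈ univ.filter (fun u : Fin (2*r+1) => C u i = 0) :=
            Finset.mem_filter.2 ⟨Finset.mem_univ u, hu⟩
          rw [h] at this
          exact Finset.notMem_empty u this
        have h1 : Pset C 0 i = Y := hPY 0 (hall 0)
        have h2 : Y = univ := by
          rw [hYdef]
          apply Finset.eq_univ_of_forall
          intro u
          exact Finset.mem_filter.2 ⟨Finset.mem_univ u, hall u⟩
        have h3 := hPcard 0
        rw [h1, h2, Finset.card_univ, Fintype.card_fin] at h3
        omega
      have hYne : Y.Nonempty := by
        by_contra h
        rw [Finset.not_nonempty_iff_eq_empty, hYdef] at h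
        have hall : ∀ u, C u i = 0 := by
          intro u
          by_contra hu
          have : u ∈ univ.filter (fun u : Fin (2*r+1) => ¬ C u i = 0) :=
            Finset.mem_filter.2 ⟨Finset.mem_univ u, hu⟩
          rw [h] at this
          exact Finset.notMem_empty u this
        have h1 : Pset C 0 i = X := hPX 0 (hall 0)
        have h2 : X = univ := by
          rw [hXdef]
          apply Finset.eq_univ_of_forall
          intro u
          exact Finset.mem_filter.2 ⟨Finset.mem_univ u, hall u⟩
        have h3 := hPcard 0
        rw [h1, h2, Finset.card_univ, Fintype.card_fin] at h3
        omega
      obtain ⟨vx, hvx⟩ := hXne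
      obtain ⟨vy, hvy⟩ := hYne
      have hvx0 : C vx i = 0 := by
        rw [hXdef] at hvx
        exact (Finset.mem_filter.1 hvx).2
      have hvy0 : ¬ C vy i = 0 := by
        rw [hYdef] at hvy
        exact (Finset.mem_filter.1 hvy).2
      have hXval : #X = #(Aset C vx i) + 1 := by
        rw [← hPX vx hvx0]; exact Pset_card
      have hYval : #Y = #(Aset C vy i) + 1 := by
        rw [← hPY vy hvy0]; exact Pset_card
      have hXr : #X = r ∨ #X = r + 1 := by
        have := hbal i vx; omega
      have hYr : #Y = r ∨ #Y = r + 1 := by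
        have := hbal i vy; omega
      rcases hXr with hX | hX
      · -- #X = r, #Y = r+1
        have hYc : #Y = r + 1 := by omega
        have heq : univ.filter (fun v : Fin (2*r+1) => #(Aset C v i) = r) = Y := by
          ext v
          simp only [Finset.mem_filter, Finset.mem_univ, true_and]
          constructor
          · intro hv
            by_contra hvY
            have hv0 : C v i = 0 := by
              by_contra hc
              exact hvY (by rw [hYdef]; exact Finset.mem_filter.2 ⟨Finset.mem_univ v, hc⟩)
            have h1 : #(Pset C v i) = #X := by rw [hPX v hv0]
            have h2 : #(Pset C v i) = #(Aset C v i) + 1 := Pset_card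
            omega
          · intro hv
            have hv0 : ¬ C v i = 0 := by
              rw [hYdef] at hv
              exact (Finset.mem_filter.1 hv).2
            have h1 : #(Pset C v i) = #Y := by rw [hPY v hv0]
            have h2 : #(Pset C v i) = #(Aset C v i) + 1 := Pset_card
            omega
        rw [heq, hYc]
      · -- #X = r+1, #Y = r
        have hYc : #Y = r := by omega
        have heq : univ.filter (fun v : Fin (2*r+1) => #(Aset C v i) = r) = X := by
          ext v
          simp only [Finset.mem_filter, Finset.mem_univ, true_and]
          constructor
          · intro hv
            by_contra hvX
            have hv0 : ¬ C v i = 0 := by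
              by_contra hc
              exact hvX (by rw [hXdef]; exact Finset.mem_filter.2 ⟨Finset.mem_univ v, hc⟩)
            have h1 : #(Pset C v i) = #Y := by rw [hPY v hv0]
            have h2 : #(Pset C v i) = #(Aset C v i) + 1 := Pset_card
            omega
          · intro hv
            have hv0 : C v i = 0 := by
              rw [hXdef] at hv
              exact (Finset.mem_filter.1 hv).2
            have h1 : #(Pset C v i) = #X := by rw [hPX v hv0]
            have h2 : #(Pset C v i) = #(Aset C v i) + 1 := Pset_card
            omega
        rw [heq, hX]
    -- double counting
    have hdouble : ∑ v : Fin (2*r+1), #(univ.filter (fun i : Fin N => #(Aset C v i) = r))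
        = ∑ i : Fin N, #(univ.filter (fun v : Fin (2*r+1) => #(Aset C v i) = r)) := by
      simp_rw [Finset.card_filter]
      exact Finset.sum_comm
    have hRHS : ∑ i : Fin N, #(univ.filter (fun v : Fin (2*r+1) => #(Aset C v i) = r))
        = N * (r+1) := by
      rw [Finset.sum_congr rfl (fun i _ => hinner i), Finset.sum_const, Finset.card_univ,
        Fintype.card_fin, smul_eq_mul]
    have hTsplit := Finset.sum_filter_add_sum_filter_not univ
      (fun v : Fin (2*r+1) => #(univ.filter (fun i : Fin N => #(Aset C v i) = r)) = 0)
      (fun v : Fin (2*r+1) => #(univ.filter (fun i : Fin N => #(Aset C v i) = r)))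
    have hsum0 : ∑ v ∈ univ.filter
        (fun v : Fin (2*r+1) => #(univ.filter (fun i : Fin N => #(Aset C v i) = r)) = 0),
        #(univ.filter (fun i : Fin N => #(Aset C v i) = r)) = 0 :=
      Finset.sum_eq_zero (fun v hv => (Finset.mem_filter.1 hv).2)
    have hsumH : ∑ v ∈ univ.filter
        (fun v : Fin (2*r+1) => ¬ #(univ.filter (fun i : Fin N => #(Aset C v i) = r)) = 0),
        #(univ.filter (fun i : Fin N => #(Aset C v i) = r))
        = #(univ.filter
          (fun v : Fin (2*r+1) => ¬ #(univ.filter (fun i : Fin N => #(Aset C v i) = r)) = 0))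
          * ((2*r-1).choose (r-1)) := by
      rw [Finset.sum_congr rfl (fun v hv => ?_), Finset.sum_const, smul_eq_mul]
      have h2 := (Finset.mem_filter.1 hv).2
      rcases (hstruct v).2 with h | h
      · exact absurd h h2
      · exact h
    have hHpos : 0 < (2*r-1).choose (r-1) := Nat.choose_pos (by omega)
    have hid := choose_id (show 1 ≤ r by omega)
    have hNval : N * (r+1) = (2*r).choose (r-1) * (r+1) := by
      rw [hN]
      congr 2
      omega
    have hTcard : #(univ.filter
        (fun v : Fin (2*r+1) => ¬ #(univ.filter (fun i : Fin N => #(Aset C v i) = r)) = 0))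
        = 2*r := by
      apply Nat.eq_of_mul_eq_mul_right hHpos
      omega
    have hTne : (univ \ univ.filter
        (fun v : Fin (2*r+1) => ¬ #(univ.filter (fun i : Fin N => #(Aset C v i) = r)) = 0)).Nonempty := by
      rw [← Finset.card_pos, Finset.card_sdiff_of_subset (Finset.filter_subset _ _), Finset.card_univ,
        Fintype.card_fin, hTcard]
      omega
    obtain ⟨v0, hv0⟩ := hTne
    rw [Finset.mem_sdiff] at hv0
    have hzero : #(univ.filter (fun i : Fin N => #(Aset C v0 i) = r)) = 0 := by
      by_contra h
      exact hv0.2 (Finset.mem_filter.2 ⟨Finset.mem_univ _, h⟩)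
    have hnone : ∀ i, ¬ #(Aset C v0 i) = r := by
      intro i hi
      have : i ∈ univ.filter (fun i : Fin N => #(Aset C v0 i) = r) :=
        Finset.mem_filter.2 ⟨Finset.mem_univ _, hi⟩
      rw [Finset.card_eq_zero.1 hzero] at this
      exact Finset.notMem_empty _ this
    refine ⟨v0, fun i => ?_⟩
    have h1 := hbal i v0
    have h2 : #(Aset C v0 i) = r - 1 := by
      rcases h1 with h | h
      · exact h
      · exact absurd h (hnone i)
    rw [Pset_card, h2]
    omega
  · -- n0 = 2s+1 odd, i.e. m even
    obtain ⟨s, hsdef⟩ := ho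
    subst hsdef
    have hs1 : 1 ≤ s := by omega
    have heven := even_struct (γ := Fin (2*s+1)) hs1 (by rw [Fintype.card_fin])
      (fam_anti hcov 0) (fam_coint hcov 0)
      (by rw [fam_card hcov 0, hN]; congr 1; omega)
    refine ⟨0, fun i => ?_⟩
    have hA := heven _ (Finset.mem_image_of_mem _ (Finset.mem_univ i))
    rw [Pset_card, hA]
    omega

end CAWork


namespace CAWork
open Finset
open scoped FinsetFamily

lemma fin2_eq_zero {x : Fin 2} (h : ¬ x = 1) : x = 0 := by fin_cases x <;> simp_all

lemma fin2_helper : ∀ (a b x y : Fin 2), ((x = a) ↔ (y = b)) →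
    x = (if a = b then Equiv.refl (Fin 2) else Equiv.swap 0 1) y := by decide

lemma star_card {n0 : ℕ} (v : Fin (n0+1)) {w : ℕ} (hw : 1 ≤ w) :
    #((Finset.powersetCard w (univ : Finset (Fin (n0+1)))).filter (fun T => v ∈ T))
      = n0.choose (w-1) := by
  classical
  have himg : (Finset.powersetCard w (univ : Finset (Fin (n0+1)))).filter (fun T => v ∈ T)
      = (Finset.powersetCard (w-1) (univ.erase v)).image (insert v) := by
    ext T
    simp only [Finset.mem_filter, Finset.mem_powersetCard, Finset.mem_image]
    constructor
    · rintro ⟨⟨_, hTcard⟩, hvT⟩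
      refine ⟨T.erase v, ⟨?_, ?_⟩, Finset.insert_erase hvT⟩
      · intro x hx
        rw [Finset.mem_erase] at hx ⊢
        exact ⟨hx.1, Finset.mem_univ x⟩
      · rw [Finset.card_erase_of_mem hvT, hTcard]
    · rintro ⟨S, ⟨hSsub, hScard⟩, rfl⟩
      have hvS : v ∉ S := fun h => (Finset.mem_erase.1 (hSsub h)).1 rfl
      exact ⟨⟨Finset.subset_univ _, by
        rw [Finset.card_insert_of_notMem hvS, hScard]; omega⟩, Finset.mem_insert_self _ _⟩
  rw [himg, Finset.card_image_of_injOn (by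
    intro S1 h1 S2 h2 h
    rw [Finset.mem_coe, Finset.mem_powersetCard] at h1 h2
    have hv1 : v ∉ S1 := fun hh => (Finset.mem_erase.1 (h1.1 hh)).1 rfl
    have hv2 : v ∉ S2 := fun hh => (Finset.mem_erase.1 (h2.1 hh)).1 rfl
    rw [← Finset.erase_insert hv1, ← Finset.erase_insert hv2, h])]
  rw [Finset.card_powersetCard, Finset.card_erase_of_mem (Finset.mem_univ v),
    Finset.card_univ, Fintype.card_fin, Nat.add_sub_cancel]

lemma build_equiv {n0 N : ℕ} {w : ℕ} (hw : 1 ≤ w) (hN : N = n0.choose (w-1))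
    (C X : Fin (n0+1) → Fin N → Fin 2) (v v' : Fin (n0+1))
    (hCinj : Function.Injective (fun i => Pset C v i))
    (hXinj : Function.Injective (fun i => Pset X v' i))
    (hCcard : ∀ i, #(Pset C v i) = w) (hXcard : ∀ i, #(Pset X v' i) = w) :
    CAEquiv C X := by
  classical
  set σ0 : Equiv.Perm (Fin (n0+1)) := Equiv.swap v v' with hσ0
  set star := (Finset.powersetCard w (univ : Finset (Fin (n0+1)))).filter (fun T => v' ∈ T)
    with hstar
  have hstarcard : #star = N := by rw [hstar, star_card v' hw, hN]
  have hgCmem : ∀ i, (Pset C v i).map σ0.toEmbedding ∈ star := by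
    intro i
    rw [hstar, Finset.mem_filter, Finset.mem_powersetCard]
    refine ⟨⟨Finset.subset_univ _, by rw [Finset.card_map]; exact hCcard i⟩, ?_⟩
    rw [Finset.mem_map]
    refine ⟨v, self_mem_Pset, ?_⟩
    simp [hσ0]
  have hgXmem : ∀ i, Pset X v' i ∈ star := by
    intro i
    rw [hstar, Finset.mem_filter, Finset.mem_powersetCard]
    exact ⟨⟨Finset.subset_univ _, hXcard i⟩, self_mem_Pset⟩
  have hCinj' : Function.Injective
      (fun i => (⟨(Pset C v i).map σ0.toEmbedding, hgCmem i⟩ : {T // T ∈ star})) := by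
    intro i j h
    apply hCinj
    have h2 := congrArg Subtype.val h
    simp only at h2
    exact Finset.map_injective _ h2
  have hXinj' : Function.Injective
      (fun i => (⟨Pset X v' i, hgXmem i⟩ : {T // T ∈ star})) := by
    intro i j h
    apply hXinj
    have h2 := congrArg Subtype.val h
    simp only at h2
    exact h2
  have hcards : Fintype.card {T // T ∈ star} = Fintype.card (Fin N) := by
    rw [Fintype.card_coe, hstarcard, Fintype.card_fin]
  have hbijC : Function.Bijective
      (fun i => (⟨(Pset C v i).map σ0.toEmbedding, hgCmem i⟩ : {T // T ∈ star})) :=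
    (Fintype.bijective_iff_injective_and_card _).2 ⟨hCinj', hcards.symm⟩
  have hbijX : Function.Bijective
      (fun i => (⟨Pset X v' i, hgXmem i⟩ : {T // T ∈ star})) :=
    (Fintype.bijective_iff_injective_and_card _).2 ⟨hXinj', hcards.symm⟩
  set eC := Equiv.ofBijective _ hbijC with heC
  set eX := Equiv.ofBijective _ hbijX with heX
  set τ : Equiv.Perm (Fin N) := eX.trans eC.symm with hτ
  have key : ∀ i, Pset X v' i = (Pset C v (τ i)).map σ0.toEmbedding := by
    intro i
    have h1 : eC (τ i) = eX i := by
      rw [hτ]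
      exact Equiv.apply_symm_apply eC (eX i)
    have h2 := congrArg Subtype.val h1
    simp only [heC, heX, Equiv.ofBijective_apply] at h2
    exact h2.symm
  refine ⟨σ0, τ, fun i => if X v' i = C (σ0 v') (τ i) then Equiv.refl (Fin 2)
    else Equiv.swap 0 1, ?_⟩
  intro rr i
  have hvv : C (σ0 v') (τ i) = C v (τ i) := by
    rw [hσ0, Equiv.swap_apply_right]
  have h3 : σ0.symm rr = σ0 rr := by rw [hσ0, Equiv.symm_swap]
  have hiff : (X rr i = X v' i) ↔ (C (σ0 rr) (τ i) = C (σ0 v') (τ i)) := by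
    rw [← mem_Pset (C := X) (v := v') (i := i) (rr := rr), key i,
      Finset.mem_map_equiv, h3, mem_Pset, hvv]
  exact fin2_helper _ _ _ _ hiff

lemma standard_struct {n0 : ℕ} (hn0 : 3 ≤ n0)
    {S : Fin (n0+1) → Fin ((n0+1-1).choose ((n0+1)/2 - 1)) → Fin 2}
    (hS : IsStandardMaxArray (n0+1) S) :
    Function.Injective (fun i => Pset S 0 i) ∧ ∀ i, #(Pset S 0 i) = (n0+1)/2 := by
  obtain ⟨h1, h2, h3⟩ := hS
  have hS0 : ∀ i, S 0 i = 1 := fun i => h1 0 i (by simp)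
  constructor
  · intro i j h
    have h' : Pset S 0 i = Pset S 0 j := h
    apply h2
    funext rr
    have hiff : (S rr i = 1) ↔ (S rr j = 1) := by
      constructor
      · intro hh
        have hm : rr ∈ Pset S 0 i := mem_Pset.2 (by rw [hh, hS0 i])
        rw [h'] at hm
        have := mem_Pset.1 hm
        rw [hS0 j] at this
        exact this
      · intro hh
        have hm : rr ∈ Pset S 0 j := mem_Pset.2 (by rw [hh, hS0 j])
        rw [← h'] at hm
        have := mem_Pset.1 hm
        rw [hS0 i] at this
        exact this
    show S rr i = S rr j
    by_cases hcase : S rr i = 1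
    · rw [hcase, (hiff.1 hcase)]
    · rw [fin2_eq_zero hcase, fin2_eq_zero (fun hh => hcase (hiff.2 hh))]
  · intro i
    have hPeq : Pset S 0 i
        = insert 0 (univ.filter (fun rr : Fin (n0+1) => (rr:ℕ) ≠ 0 ∧ S rr i = 1)) := by
      ext rr
      rw [mem_Pset, hS0 i, Finset.mem_insert, Finset.mem_filter]
      constructor
      · intro hh
        by_cases h0 : rr = 0
        · exact Or.inl h0
        · refine Or.inr ⟨Finset.mem_univ rr, ?_, hh⟩
          intro hv
          exact h0 (by
            have : (rr : ℕ) = ((0 : Fin (n0+1)) : ℕ) := by simpa using hv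
            exact Fin.ext this)
      · rintro (rfl | ⟨_, _, hh⟩)
        · exact hS0 i
        · exact hh
    rw [hPeq, Finset.card_insert_of_notMem (by
      rw [Finset.mem_filter]
      rintro ⟨_, h0, _⟩
      exact h0 (by simp))]
    have h3i : #(univ.filter (fun rr : Fin (n0+1) => (rr:ℕ) ≠ 0 ∧ S rr i = 1))
        = (n0+1)/2 - 1 := by
      convert h3 i using 2
    rw [h3i]
    omega

end CAWork


/-- for `m ≥ 4`, every binary 2-covering array of size `m` and maximal degree
`binom(m-1, ⌊m/2⌋-1)` is equivalent to the standard maximal binary 2-covering array of size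
`m`; in particular any two such maximal arrays are equivalent. -/
theorem maximal_unique (m : ℕ) (hm : 4 ≤ m)
    (C : Fin m → Fin ((m-1).choose (m/2 - 1)) → Fin 2)
    (hC : IsCoveringArray m ((m-1).choose (m/2 - 1)) 2 2 C) :
    (∀ S : Fin m → Fin ((m-1).choose (m/2 - 1)) → Fin 2,
      IsStandardMaxArray m S → CAEquiv C S) ∧
    (∀ C' : Fin m → Fin ((m-1).choose (m/2 - 1)) → Fin 2,
      IsCoveringArray m ((m-1).choose (m/2 - 1)) 2 2 C' → CAEquiv C C') := by

  obtain ⟨n0, rfl⟩ : ∃ n0, m = n0 + 1 := ⟨m-1, by omega⟩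
  have hn0 : 3 ≤ n0 := by omega
  have hw : 1 ≤ (n0+1)/2 := by omega
  have hN : (n0+1-1).choose ((n0+1)/2 - 1) = n0.choose ((n0+1)/2 - 1) := rfl
  have hcov := CAWork.cov_of_isCoveringArray hC
  obtain ⟨v, hv⟩ := CAWork.main_struct hn0 hcov hN
  constructor
  · intro S hS
    obtain ⟨hSinj, hScard⟩ := CAWork.standard_struct hn0 hS
    exact CAWork.build_equiv hw hN C S v 0 (CAWork.Pset_injective hcov v) hSinj hv hScard
  · intro C' hC'
    have hcov' := CAWork.cov_of_isCoveringArray hC'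
    obtain ⟨v', hv'⟩ := CAWork.main_struct hn0 hcov' hN
    exact CAWork.build_equiv hw hN C C' v v' (CAWork.Pset_injective hcov v)
      (CAWork.Pset_injective hcov' v') hv hv'
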